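/- Let Λ = U ⊕ Λ' be an even lattice containing the hyperbolic plane U as an orthogonal direct summand, with standard basis f₁, f₂ of U. Let v₁, …, vₙ be a ℤ-basis of Λ'. Then the elements f₁, f₂, and v_j − m_j·f₁ + f₂ for 1 ≤ j ≤ n (where m_j is the integer with B(v_j, v_j) = 2·m_j) all satisfy B(x,x) = 0, and together they form a ℤ-basis of Λ. In particular, every even lattice containing U as an orthogonal direct summand admits a ℤ-basis consisting of isotropic vectors. (This is the construction in Step 2, case (1), of the proof of Theorem 4.9.) -/

import Mathlib

/-- Step 2, case (1), of the proof of Theorem 4.9: an even lattice containing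
the hyperbolic plane `U` as an orthogonal direct summand has a ℤ-basis of
isotropic vectors, namely `f₁, f₂, v_j − m_j·f₁ + f₂`. -/
theorem stmt_4
    (Λ : Type*) [AddCommGroup Λ] [Module ℤ Λ]
    (B : Λ →ₗ[ℤ] Λ →ₗ[ℤ] ℤ)
    (hB_symm : ∀ x y : Λ, B x y = B y x)
    (hB_even : ∀ x : Λ, (2 : ℤ) ∣ B x x)
    (f₁ f₂ : Λ) (Λ' : Submodule ℤ Λ)
    (hf₁ : B f₁ f₁ = 0) (hf₂ : B f₂ f₂ = 0) (hf₁f₂ : B f₁ f₂ = 1)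
    (horth : ∀ x ∈ Λ', B f₁ x = 0 ∧ B f₂ x = 0)
    (hcompl : IsCompl (Submodule.span ℤ ({f₁, f₂} : Set Λ)) Λ')
    (n : ℕ) (v : Module.Basis (Fin n) ℤ Λ')
    (m : Fin n → ℤ) (hm : ∀ j, B (v j : Λ) (v j : Λ) = 2 * m j)
    (g : Fin 2 ⊕ Fin n → Λ)
    (hg : g = Sum.elim ![f₁, f₂] (fun j => ((v j : Λ) - m j • f₁) + f₂)) :
    (∀ i, B (g i) (g i) = 0) ∧ LinearIndependent ℤ g ∧
      Submodule.span ℤ (Set.range g) = ⊤ := by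
  have hf₂f₁ : B f₂ f₁ = 1 := by rw [hB_symm]; exact hf₁f₂
  have hv1 : ∀ j, B f₁ (v j : Λ) = 0 := fun j => (horth _ (v j).2).1
  have hv2 : ∀ j, B f₂ (v j : Λ) = 0 := fun j => (horth _ (v j).2).2
  have hv1' : ∀ j, B (v j : Λ) f₁ = 0 := fun j => by rw [hB_symm]; exact hv1 j
  have hv2' : ∀ j, B (v j : Λ) f₂ = 0 := fun j => by rw [hB_symm]; exact hv2 j
  have bridge := fun (a : ℤ) (y : Λ) => Int.cast_smul_eq_zsmul ℤ a y
  simp only [Int.cast_id] at bridge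
  have coesmul : ∀ (a : ℤ) (y : Λ'), ((a • y : Λ') : Λ) = a • (y : Λ) := by
    intro a y; norm_cast
  subst hg
  refine ⟨?_, ?_, ?_⟩
  · rintro (i | j)
    · fin_cases i <;> simpa
    · simp only [Sum.elim_inr, ← bridge]
      simp only [map_add, map_sub, map_smul, LinearMap.add_apply, LinearMap.sub_apply,
        LinearMap.smul_apply, hm, hv1, hv2, hv1', hv2', hf₁, hf₂, hf₁f₂, hf₂f₁, smul_eq_mul]
      ring
  · rw [Fintype.linearIndependent_iff]
    intro c hc
    rw [Fintype.sum_sum_type, Fin.sum_univ_two] at hc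
    simp only [Sum.elim_inl, Sum.elim_inr, Matrix.cons_val_zero, Matrix.cons_val_one,
      Matrix.head_cons] at hc
    simp only [← bridge] at hc
    have expand : ∑ x : Fin n, c (Sum.inr x) • (((v x : Λ) - m x • f₁) + f₂) =
        (∑ x : Fin n, c (Sum.inr x) • (v x : Λ)) -
          (∑ x : Fin n, c (Sum.inr x) * m x) • f₁ +
          (∑ x : Fin n, c (Sum.inr x)) • f₂ := by
      simp only [← bridge]
      rw [Finset.sum_smul, Finset.sum_smul, ← Finset.sum_sub_distrib,
        ← Finset.sum_add_distrib]
      exact Finset.sum_congr rfl fun j _ => by rw [smul_add, smul_sub]; module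
    simp only [← bridge] at expand
    rw [expand] at hc
    have hS : (∑ x : Fin n, c (Sum.inr x) • (v x : Λ)) =
        (∑ x : Fin n, c (Sum.inr x) * m x - c (Sum.inl 0)) • f₁ +
          (-(c (Sum.inl 1) + ∑ x : Fin n, c (Sum.inr x))) • f₂ := by
      simp only [← bridge]
      linear_combination (norm := module) hc
    have hS_span : (∑ x : Fin n, c (Sum.inr x) • (v x : Λ)) ∈
        Submodule.span ℤ ({f₁, f₂} : Set Λ) := by
      rw [hS]
      simp only [← bridge]
      exact add_mem
        (Submodule.smul_mem _ _ (Submodule.subset_span (Set.mem_insert _ _)))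
        (Submodule.smul_mem _ _ (Submodule.subset_span
          (Set.mem_insert_of_mem _ (Set.mem_singleton _))))
    have hS_mem : (∑ x : Fin n, c (Sum.inr x) • (v x : Λ)) ∈ Λ' := by
      simp only [← bridge]
      exact Submodule.sum_mem _ fun j _ => Submodule.smul_mem _ _ (v j).2
    have hS0 : (∑ x : Fin n, c (Sum.inr x) • (v x : Λ)) = 0 :=
      (Submodule.disjoint_def.mp hcompl.disjoint) _ hS_span hS_mem
    have hck : ∀ j, c (Sum.inr j) = 0 := by
      have hSΛ' : (∑ x : Fin n, c (Sum.inr x) • v x) = (0 : Λ') := by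
        apply Subtype.ext
        rw [AddSubmonoidClass.coe_finset_sum]
        simp only [coesmul]
        simpa using hS0
      exact fun j => Fintype.linearIndependent_iff.mp v.linearIndependent _ hSΛ' j
    simp only [hck, zero_smul, zero_mul, Finset.sum_const_zero, sub_zero, add_zero,
      neg_add_rev, neg_zero, zero_add, zero_sub, neg_smul, zero_smul] at hc
    have ha0 : c (Sum.inl 0) = 0 := by
      have h := congrArg (fun z => B f₂ z) hc
      simpa [hf₂, hf₂f₁] using h
    have hb0 : c (Sum.inl 1) = 0 := by
      have h := congrArg (fun z => B f₁ z) hc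
      simpa [hf₁, hf₁f₂] using h
    rintro (i | j)
    · fin_cases i
      · exact ha0
      · exact hb0
    · exact hck j
  · rw [eq_top_iff, ← codisjoint_iff.mp hcompl.codisjoint]
    have hf₁mem : f₁ ∈ Submodule.span ℤ (Set.range (Sum.elim ![f₁, f₂]
        (fun j => ((v j : Λ) - m j • f₁) + f₂))) :=
      Submodule.subset_span ⟨Sum.inl 0, rfl⟩
    have hf₂mem : f₂ ∈ Submodule.span ℤ (Set.range (Sum.elim ![f₁, f₂]
        (fun j => ((v j : Λ) - m j • f₁) + f₂))) :=
      Submodule.subset_span ⟨Sum.inl 1, rfl⟩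
    apply sup_le
    · rw [Submodule.span_le]
      intro x hx
      simp only [Set.mem_insert_iff, Set.mem_singleton_iff] at hx
      rcases hx with rfl | rfl
      · exact hf₁mem
      · exact hf₂mem
    · intro x hx
      have hvj : ∀ j, (v j : Λ) ∈ Submodule.span ℤ (Set.range (Sum.elim ![f₁, f₂]
          (fun j => ((v j : Λ) - m j • f₁) + f₂))) := by
        intro j
        have hgj : ((v j : Λ) - m j • f₁) + f₂ ∈ Submodule.span ℤ (Set.range (Sum.elim ![f₁, f₂]
            (fun j => ((v j : Λ) - m j • f₁) + f₂))) :=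
          Submodule.subset_span ⟨Sum.inr j, rfl⟩
        have heq : (v j : Λ) = (((v j : Λ) - m j • f₁) + f₂) + m j • f₁ - f₂ := by abel
        rw [heq]
        refine sub_mem (add_mem hgj ?_) hf₂mem
        rw [← bridge]
        exact Submodule.smul_mem _ _ hf₁mem
      have h := congrArg (fun z : Λ' => (z : Λ)) (Module.Basis.sum_repr v ⟨x, hx⟩)
      simp only [AddSubmonoidClass.coe_finset_sum, coesmul, ← bridge] at h
      rw [← h]
      exact Submodule.sum_mem _ fun j _ => Submodule.smul_mem _ _ (hvj j)
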